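/- In the modified AKV model, set a := 2(N−1)Γ_{2,−} and b := 2(N−1)Γ_{2,+}, and regard ℒ_* as a linear endomorphism of the space of linear operators on h. If σ is a state whose range is contained in Im|Z| ∩ {ψ, Z*ψ'}^⊥, then for every t ≥ 0 one has exp(t ℒ_*)(σ) = ((b + a·e^{−t(a+b)})/(a+b)) σ + ((a·(1 − e^{−t(a+b)}))/(a+b)) Z σ Z*; consequently exp(t ℒ_*)(σ) converges, as t → ∞, to (b/(a+b)) σ + (a/(a+b)) Z σ Z*. -/

import Mathlib

noncomputable section

open ContinuousLinearMap Finset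
open scoped InnerProductSpace

/-- The Hilbert space ℂ^(N+M+1) of the modified AKV model. -/
abbrev AKVSpace (N M : ℕ) := EuclideanSpace ℂ (Fin (N + M + 1))

namespace AKV

variable (N M : ℕ)

/-- standard basis vector -/
def ket (i : Fin (N + M + 1)) : AKVSpace N M := EuclideanSpace.single i 1

/-- rank-one operator |u⟩⟨v| : x ↦ ⟪v, x⟫ • u -/
def ketbra (u v : AKVSpace N M) : AKVSpace N M →L[ℂ] AKVSpace N M :=
  (innerSL ℂ v).smulRight u

/-- indices 2,…,N of the second level -/
def idx2 : Finset (Fin (N + M + 1)) := univ.filter fun i => 2 ≤ (i : ℕ) ∧ (i : ℕ) ≤ N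
/-- indices N+1,…,N+M of the third level -/
def idx3 : Finset (Fin (N + M + 1)) := univ.filter fun i => N + 1 ≤ (i : ℕ)

/-- orthogonal projection onto span{e_0} -/
def P0 : AKVSpace N M →L[ℂ] AKVSpace N M := ketbra N M (ket N M 0) (ket N M 0)
/-- orthogonal projection onto span{e_1} -/
def P1 : AKVSpace N M →L[ℂ] AKVSpace N M := ketbra N M (ket N M 1) (ket N M 1)
/-- orthogonal projection onto span{e_2,…,e_N} -/
def P2 : AKVSpace N M →L[ℂ] AKVSpace N M := ∑ i ∈ idx2 N M, ketbra N M (ket N M i) (ket N M i)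
/-- orthogonal projection onto span{e_{N+1},…,e_{N+M}} -/
def P3 : AKVSpace N M →L[ℂ] AKVSpace N M := ∑ i ∈ idx3 N M, ketbra N M (ket N M i) (ket N M i)

/-- ψ = e_2 + ⋯ + e_N -/
def psi : AKVSpace N M := ∑ i ∈ idx2 N M, ket N M i
/-- ψ' = e_{N+1} + ⋯ + e_{N+M} -/
def psi' : AKVSpace N M := ∑ i ∈ idx3 N M, ket N M i

/-- |Z| = Z⋆Z -/
def absZ (Z : AKVSpace N M →L[ℂ] AKVSpace N M) : AKVSpace N M →L[ℂ] AKVSpace N M :=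
  adjoint Z * Z

/-- hypotheses on the interference operator Z of the modified AKV model -/
def IsAKVZ (hM : 1 ≤ M) (Z : AKVSpace N M →L[ℂ] AKVSpace N M) : Prop :=
  Z = P3 N M * Z * P2 N M ∧
  Z * adjoint Z = P3 N M ∧
  Z (ket N M ⟨N - 1, by omega⟩) = ((Real.sqrt ((N : ℝ) - 1))⁻¹ : ℂ) • psi' N M ∧
  adjoint Z (ket N M ⟨N + 1, by omega⟩) = ((Real.sqrt ((N : ℝ) - 1))⁻¹ : ℂ) • psi N M

/-- the five Kraus operators -/
def kraus (Γ1m Γ1p Γ2m Γ2p Γ3m : ℝ) (Z : AKVSpace N M →L[ℂ] AKVSpace N M) :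
    Fin 5 → AKVSpace N M →L[ℂ] AKVSpace N M :=
  ![((Real.sqrt (2 * Γ1m) : ℝ) : ℂ) • ketbra N M (psi N M) (ket N M 1),
    ((Real.sqrt (2 * ((N : ℝ) - 1) * Γ2m) : ℝ) : ℂ) • Z,
    ((Real.sqrt (2 * Γ3m) : ℝ) : ℂ) • ketbra N M (ket N M 0) (psi' N M),
    ((Real.sqrt (2 * Γ1p) : ℝ) : ℂ) • ketbra N M (ket N M 1) (psi N M),
    ((Real.sqrt (2 * ((N : ℝ) - 1) * Γ2p) : ℝ) : ℂ) • adjoint Z]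

/-- the effective Hamiltonian -/
def Heff (γ1m γ1p γ2m γ2p γ3m : ℝ) (Z : AKVSpace N M →L[ℂ] AKVSpace N M) :
    AKVSpace N M →L[ℂ] AKVSpace N M :=
  (γ1p : ℂ) • ketbra N M (psi N M) (psi N M)
    - (((N : ℂ) - 1) * (γ1m : ℂ)) • ketbra N M (ket N M 1) (ket N M 1)
    + (((N : ℂ) - 1) * (γ2p : ℂ)) • P3 N M
    - (((N : ℂ) - 1) * (γ2m : ℂ)) • absZ N M Z
    - (γ3m : ℂ) • ketbra N M (psi' N M) (psi' N M)

/-- the predual GKSL generator ℒ_* of the modified AKV model -/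
def Lstar (Γ1m Γ1p Γ2m Γ2p Γ3m γ1m γ1p γ2m γ2p γ3m : ℝ)
    (Z ρ : AKVSpace N M →L[ℂ] AKVSpace N M) : AKVSpace N M →L[ℂ] AKVSpace N M :=
  -Complex.I • (Heff N M γ1m γ1p γ2m γ2p γ3m Z * ρ - ρ * Heff N M γ1m γ1p γ2m γ2p γ3m Z)
    + ∑ k : Fin 5,
        (kraus N M Γ1m Γ1p Γ2m Γ2p Γ3m Z k * ρ * adjoint (kraus N M Γ1m Γ1p Γ2m Γ2p Γ3m Z k)
          - (1 / 2 : ℂ) • (adjoint (kraus N M Γ1m Γ1p Γ2m Γ2p Γ3m Z k) *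
                kraus N M Γ1m Γ1p Γ2m Γ2p Γ3m Z k * ρ
              + ρ * (adjoint (kraus N M Γ1m Γ1p Γ2m Γ2p Γ3m Z k) *
                kraus N M Γ1m Γ1p Γ2m Γ2p Γ3m Z k)))

/-- a state: positive semidefinite with trace one -/
def IsState (ρ : AKVSpace N M →L[ℂ] AKVSpace N M) : Prop :=
  ρ.IsPositive ∧ LinearMap.trace ℂ (AKVSpace N M) ↑ρ = 1

/-- the interaction-free subspace W_D -/
def WD (Z : AKVSpace N M →L[ℂ] AKVSpace N M) : Submodule ℂ (AKVSpace N M) :=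
  (Submodule.span ℂ {ket N M 1, psi N M, psi' N M})ᗮ ⊓
    LinearMap.ker (Z : AKVSpace N M →ₗ[ℂ] AKVSpace N M) ⊓ LinearMap.ker (adjoint Z : AKVSpace N M →ₗ[ℂ] AKVSpace N M)

/-- the subspace V = {e_0, e_1, ψ, ψ', Zψ, Z⋆ψ'}^⊥ -/
def Vsub (Z : AKVSpace N M →L[ℂ] AKVSpace N M) : Submodule ℂ (AKVSpace N M) :=
  (Submodule.span ℂ
    {ket N M 0, ket N M 1, psi N M, psi' N M, Z (psi N M), adjoint Z (psi' N M)})ᗮ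

/-- Im|Z| ∩ {ψ, Z⋆ψ'}^⊥ -/
def subA (Z : AKVSpace N M →L[ℂ] AKVSpace N M) : Submodule ℂ (AKVSpace N M) :=
  LinearMap.range (absZ N M Z : AKVSpace N M →ₗ[ℂ] AKVSpace N M) ⊓ (Submodule.span ℂ {psi N M, adjoint Z (psi' N M)})ᗮ

/-- ran P₃ ∩ {ψ', Zψ}^⊥ -/
def subB (Z : AKVSpace N M →L[ℂ] AKVSpace N M) : Submodule ℂ (AKVSpace N M) :=
  LinearMap.range (P3 N M : AKVSpace N M →ₗ[ℂ] AKVSpace N M) ⊓ (Submodule.span ℂ {psi' N M, Z (psi N M)})ᗮ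

/-- the orthogonal projection onto a subspace, as an operator on the whole space -/
def projOp (U : Submodule ℂ (AKVSpace N M)) : AKVSpace N M →L[ℂ] AKVSpace N M :=
  U.subtypeL ∘L U.orthogonalProjectionOnto


/-- `ℒ_*` of the modified AKV model as a linear endomorphism of the operator space. -/
def LstarLin (N M : ℕ) (Γ1m Γ1p Γ2m Γ2p Γ3m γ1m γ1p γ2m γ2p γ3m : ℝ)
    (Z : AKVSpace N M →L[ℂ] AKVSpace N M) :
    (AKVSpace N M →L[ℂ] AKVSpace N M) →ₗ[ℂ] (AKVSpace N M →L[ℂ] AKVSpace N M) :=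
  -Complex.I • (LinearMap.mulLeft ℂ (Heff N M γ1m γ1p γ2m γ2p γ3m Z)
      - LinearMap.mulRight ℂ (Heff N M γ1m γ1p γ2m γ2p γ3m Z))
    + ∑ k : Fin 5,
        ((LinearMap.mulRight ℂ
            (ContinuousLinearMap.adjoint (kraus N M Γ1m Γ1p Γ2m Γ2p Γ3m Z k))).comp
            (LinearMap.mulLeft ℂ (kraus N M Γ1m Γ1p Γ2m Γ2p Γ3m Z k))
          - (1 / 2 : ℂ) •
            (LinearMap.mulLeft ℂ
              (ContinuousLinearMap.adjoint (kraus N M Γ1m Γ1p Γ2m Γ2p Γ3m Z k) *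
                kraus N M Γ1m Γ1p Γ2m Γ2p Γ3m Z k)
              + LinearMap.mulRight ℂ
                (ContinuousLinearMap.adjoint (kraus N M Γ1m Γ1p Γ2m Γ2p Γ3m Z k) *
                  kraus N M Γ1m Γ1p Γ2m Γ2p Γ3m Z k)))

set_option maxHeartbeats 1000000 in
instance (N M : ℕ) :
    IsTopologicalRing ((AKVSpace N M →L[ℂ] AKVSpace N M) →L[ℂ]
      (AKVSpace N M →L[ℂ] AKVSpace N M)) := by
  exact @NonUnitalSeminormedRing.toIsTopologicalRing
    ((AKVSpace N M →L[ℂ] AKVSpace N M) →L[ℂ] (AKVSpace N M →L[ℂ] AKVSpace N M)) _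

section Toolbox

variable {N M : ℕ}

lemma ketbra_apply (u v x : AKVSpace N M) : ketbra N M u v x = (inner ℂ v x : ℂ) • u := rfl

lemma ketbra_zero_right (u : AKVSpace N M) : ketbra N M u 0 = 0 := by
  ext x; simp [ketbra_apply]

lemma ketbra_zero_left (v : AKVSpace N M) : ketbra N M (0 : AKVSpace N M) v = 0 := by
  ext x; simp [ketbra_apply]

lemma adjoint_ketbra (u v : AKVSpace N M) :
    ContinuousLinearMap.adjoint (ketbra N M u v) = ketbra N M v u := by
  symm
  rw [ContinuousLinearMap.eq_adjoint_iff]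
  intro x y
  simp [ketbra_apply, inner_smul_left, inner_smul_right, mul_comm]

lemma mul_ketbra (A : AKVSpace N M →L[ℂ] AKVSpace N M) (u v : AKVSpace N M) :
    A * ketbra N M u v = ketbra N M (A u) v := by
  ext x; simp [ContinuousLinearMap.mul_apply, ketbra_apply]

lemma ketbra_mul (u v : AKVSpace N M) (A : AKVSpace N M →L[ℂ] AKVSpace N M) :
    ketbra N M u v * A = ketbra N M u (ContinuousLinearMap.adjoint A v) := by
  ext x
  simp [ContinuousLinearMap.mul_apply, ketbra_apply,
    ContinuousLinearMap.adjoint_inner_left]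


lemma ketbra_smul_left (c : ℂ) (u v : AKVSpace N M) :
    ketbra N M (c • u) v = c • ketbra N M u v := by
  ext1 x; rw [ContinuousLinearMap.smul_apply, ketbra_apply, ketbra_apply, smul_comm]

lemma ketbra_smul_right (c : ℂ) (u v : AKVSpace N M) :
    ketbra N M u (c • v) = (starRingEnd ℂ) c • ketbra N M u v := by
  ext x; simp [ketbra_apply, inner_smul_left, mul_smul]; ring

lemma ketbra_mul_assoc (u v : AKVSpace N M) (A W : AKVSpace N M →L[ℂ] AKVSpace N M) :
    ketbra N M u v * (A * W) = ketbra N M u (ContinuousLinearMap.adjoint A v) * W := by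
  rw [← mul_assoc, ketbra_mul]

lemma inner_ket_ket (i j : Fin (N + M + 1)) :
    (inner ℂ (ket N M i) (ket N M j) : ℂ) = if i = j then 1 else 0 := by
  simp [ket, EuclideanSpace.inner_single_left, EuclideanSpace.single_apply, eq_comm]

lemma ketbra_mul_ketbra (u v u' v' : AKVSpace N M) :
    ketbra N M u v * ketbra N M u' v' = (inner ℂ v u' : ℂ) • ketbra N M u v' := by
  ext x
  simp only [ContinuousLinearMap.mul_apply, ketbra_apply, inner_smul_right,
    ContinuousLinearMap.smul_apply, smul_smul]
  rw [mul_comm]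

lemma adjoint_P2 : ContinuousLinearMap.adjoint (P2 N M) = P2 N M := by
  rw [P2, map_sum]
  exact Finset.sum_congr rfl fun i _ => adjoint_ketbra _ _

lemma adjoint_P3 : ContinuousLinearMap.adjoint (P3 N M) = P3 N M := by
  rw [P3, map_sum]
  exact Finset.sum_congr rfl fun i _ => adjoint_ketbra _ _

lemma P3_mul_P3 : P3 N M * P3 N M = P3 N M := by
  rw [P3, Finset.sum_mul]
  refine Finset.sum_congr rfl fun i hi => ?_
  rw [Finset.mul_sum]
  have : ∀ j ∈ idx3 N M, ketbra N M (ket N M i) (ket N M i) * ketbra N M (ket N M j) (ket N M j)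
      = if i = j then ketbra N M (ket N M i) (ket N M j) else 0 := by
    intro j _
    rw [ketbra_mul_ketbra, inner_ket_ket]
    split <;> [rw [one_smul]; (ext x; simp)]
  rw [Finset.sum_congr rfl this, Finset.sum_ite_eq, if_pos hi]

lemma P2_mul_P2 : P2 N M * P2 N M = P2 N M := by
  rw [P2, Finset.sum_mul]
  refine Finset.sum_congr rfl fun i hi => ?_
  rw [Finset.mul_sum]
  have : ∀ j ∈ idx2 N M, ketbra N M (ket N M i) (ket N M i) * ketbra N M (ket N M j) (ket N M j)
      = if i = j then ketbra N M (ket N M i) (ket N M j) else 0 := by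
    intro j _
    rw [ketbra_mul_ketbra, inner_ket_ket]
    split <;> [rw [one_smul]; (ext x; simp)]
  rw [Finset.sum_congr rfl this, Finset.sum_ite_eq, if_pos hi]

lemma P2_apply_ket {j : Fin (N + M + 1)} (hj : j ∉ idx2 N M) : P2 N M (ket N M j) = 0 := by
  rw [P2, ContinuousLinearMap.sum_apply]
  refine Finset.sum_eq_zero fun i hi => ?_
  rw [ketbra_apply, inner_ket_ket, if_neg, zero_smul]
  rintro rfl; exact hj hi

lemma P3_apply_ket {j : Fin (N + M + 1)} (hj : j ∉ idx3 N M) : P3 N M (ket N M j) = 0 := by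
  rw [P3, ContinuousLinearMap.sum_apply]
  refine Finset.sum_eq_zero fun i hi => ?_
  rw [ketbra_apply, inner_ket_ket, if_neg, zero_smul]
  rintro rfl; exact hj hi

lemma P2_apply_psi' : P2 N M (psi' N M) = 0 := by
  rw [psi', map_sum]
  refine Finset.sum_eq_zero fun i hi => ?_
  apply P2_apply_ket
  simp only [idx2, idx3, Finset.mem_filter, Finset.mem_univ, true_and] at hi ⊢
  omega

lemma P3_apply_psi : P3 N M (psi N M) = 0 := by
  rw [psi, map_sum]
  refine Finset.sum_eq_zero fun i hi => ?_
  apply P3_apply_ket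
  simp only [idx2, idx3, Finset.mem_filter, Finset.mem_univ, true_and] at hi ⊢
  omega


lemma P2_mul_P3_eq_zero : P2 N M * P3 N M = 0 := by
  rw [P2, P3, Finset.sum_mul]
  refine Finset.sum_eq_zero fun i hi => ?_
  rw [Finset.mul_sum]
  refine Finset.sum_eq_zero fun j hj => ?_
  have hij : i ≠ j := by
    simp only [idx2, idx3, Finset.mem_filter, Finset.mem_univ, true_and] at hi hj
    intro h; omega
  rw [ketbra_mul_ketbra, inner_ket_ket, if_neg hij]
  ext x; simp

section Zfacts

variable {Z : AKVSpace N M →L[ℂ] AKVSpace N M}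
  (hZ1 : Z = P3 N M * Z * P2 N M) (hZ2 : Z * ContinuousLinearMap.adjoint Z = P3 N M)

include hZ1

lemma P3_mul_Z : P3 N M * Z = Z := by
  conv_lhs => rw [hZ1]
  rw [← mul_assoc, ← mul_assoc, P3_mul_P3, ← hZ1]

lemma Z_mul_P2 : Z * P2 N M = Z := by
  conv_lhs => rw [hZ1]
  rw [mul_assoc, P2_mul_P2, ← hZ1]

lemma Z_mul_P3 : Z * P3 N M = 0 := by
  conv_lhs => rw [hZ1]
  rw [mul_assoc, mul_assoc, P2_mul_P3_eq_zero, mul_zero, mul_zero]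

lemma Z_mul_Z : Z * Z = 0 := by
  nth_rewrite 2 [hZ1]
  rw [← mul_assoc, ← mul_assoc, Z_mul_P3 hZ1, zero_mul, zero_mul]

lemma adjoint_Z_eq : ContinuousLinearMap.adjoint Z
    = P2 N M * ContinuousLinearMap.adjoint Z * P3 N M := by
  conv_lhs => rw [hZ1]
  rw [show P3 N M * Z * P2 N M = (P3 N M).comp (Z.comp (P2 N M)) by rfl]
  rw [ContinuousLinearMap.adjoint_comp, ContinuousLinearMap.adjoint_comp, adjoint_P2, adjoint_P3]
  rfl

lemma Zadj_mul_Zadj :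
    ContinuousLinearMap.adjoint Z * ContinuousLinearMap.adjoint Z = 0 := by
  have h := congrArg ContinuousLinearMap.adjoint (Z_mul_Z hZ1)
  simpa [ContinuousLinearMap.mul_def, ContinuousLinearMap.adjoint_comp] using h

lemma Z_apply_eq_zero {x : AKVSpace N M} (h : P2 N M x = 0) : Z x = 0 := by
  conv_lhs => rw [hZ1]
  rw [ContinuousLinearMap.mul_apply, ContinuousLinearMap.mul_apply, h]
  simp

lemma Zadj_apply_eq_zero {x : AKVSpace N M} (h : P3 N M x = 0) :
    ContinuousLinearMap.adjoint Z x = 0 := by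
  conv_lhs => rw [adjoint_Z_eq hZ1]
  rw [ContinuousLinearMap.mul_apply, ContinuousLinearMap.mul_apply, h]
  simp

omit hZ1 in
lemma adjoint_absZ : ContinuousLinearMap.adjoint (absZ N M Z) = absZ N M Z := by
  rw [absZ, show ContinuousLinearMap.adjoint Z * Z = (ContinuousLinearMap.adjoint Z).comp Z from rfl,
    ContinuousLinearMap.adjoint_comp, ContinuousLinearMap.adjoint_adjoint]

include hZ2

lemma absZ_mul_absZ : absZ N M Z * absZ N M Z = absZ N M Z := by
  rw [absZ, mul_assoc, ← mul_assoc Z, hZ2, ← mul_assoc, mul_assoc _ (P3 N M), P3_mul_Z hZ1]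

lemma Z_mul_absZ : Z * absZ N M Z = Z := by
  rw [absZ, ← mul_assoc, hZ2, P3_mul_Z hZ1]

lemma absZ_mul_Zadj : absZ N M Z * ContinuousLinearMap.adjoint Z
    = ContinuousLinearMap.adjoint Z := by
  have h := congrArg ContinuousLinearMap.adjoint (Z_mul_absZ hZ1 hZ2)
  simpa [ContinuousLinearMap.mul_def, ContinuousLinearMap.adjoint_comp,
    adjoint_absZ (Z := Z)] using h

end Zfacts

end Toolbox

lemma exp_apply_eigenvector {E : Type*} [NormedAddCommGroup E] [NormedSpace ℂ E]
    [CompleteSpace E] (A : E →L[ℂ] E) (v : E) (c : ℂ) (h : A v = c • v) :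
    NormedSpace.exp A v = Complex.exp c • v := by
  have hpow : ∀ n : ℕ, (A ^ n) v = c ^ n • v := by
    intro n
    induction n with
    | zero => simp
    | succ n ih =>
      rw [pow_succ, ContinuousLinearMap.mul_apply, h, map_smul, ih, smul_smul, ← pow_succ']
  have hs : Summable fun n : ℕ => ((n.factorial : ℂ)⁻¹) • A ^ n :=
    NormedSpace.expSeries_summable' (𝕂 := ℂ) A
  have hmap := (ContinuousLinearMap.apply ℂ E v).map_tsum hs
  rw [NormedSpace.exp_eq_tsum (𝕂 := ℂ)]
  have : (∑' n : ℕ, ((n.factorial : ℂ)⁻¹) • A ^ n) v = ∑' n : ℕ, ((n.factorial : ℂ)⁻¹) • (A ^ n) v := by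
    simpa using hmap
  rw [this]
  have hc : ∀ n : ℕ, ((n.factorial : ℂ)⁻¹) • (A ^ n) v = (((n.factorial : ℂ)⁻¹) * c ^ n) • v := by
    intro n; rw [hpow, smul_smul]
  rw [tsum_congr hc, Summable.tsum_smul_const]
  · congr 1
    have := NormedSpace.exp_eq_tsum (𝕂 := ℂ) (𝔸 := ℂ)
    rw [Complex.exp_eq_exp_ℂ, this]
    simp [smul_eq_mul]
  · have hsc : Summable fun n : ℕ => ((n.factorial : ℂ)⁻¹) • c ^ n :=
      NormedSpace.expSeries_summable' (𝕂 := ℂ) c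
    simpa [smul_eq_mul] using hsc



set_option synthInstance.maxHeartbeats 1000000 in
instance (N M : ℕ) : SMulZeroClass ℂ (AKVSpace N M →L[ℂ] AKVSpace N M) := inferInstance

set_option synthInstance.maxHeartbeats 1000000 in
instance (N M : ℕ) : SMulWithZero ℂ (AKVSpace N M →L[ℂ] AKVSpace N M) := inferInstance

set_option synthInstance.maxHeartbeats 1000000 in
instance (N M : ℕ) : MulActionWithZero ℂ (AKVSpace N M →L[ℂ] AKVSpace N M) := inferInstance

set_option maxHeartbeats 4000000 in
set_option synthInstance.maxHeartbeats 400000 in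
/-- In the modified AKV model, with `a = 2(N−1)Γ₂₋` and `b = 2(N−1)Γ₂₊`, for every state `σ`
supported in `Im|Z| ∩ {ψ, Z⋆ψ'}^⊥` and every `t ≥ 0` one has
`exp(tℒ_*)(σ) = ((b + a e^{−t(a+b)})/(a+b)) σ + ((a(1 − e^{−t(a+b)}))/(a+b)) ZσZ⋆`, and hence
`exp(tℒ_*)(σ) → (b/(a+b)) σ + (a/(a+b)) ZσZ⋆` as `t → ∞`. -/
theorem semigroup_evolution_on_subA
    (N M : ℕ) (hN : 3 ≤ N) (hM1 : 1 ≤ M) (hM2 : M ≤ N - 1)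
    (Γ1m Γ1p Γ2m Γ2p Γ3m γ1m γ1p γ2m γ2p γ3m : ℝ)
    (hΓ : 0 < Γ1m ∧ 0 < Γ1p ∧ 0 < Γ2m ∧ 0 < Γ2p ∧ 0 < Γ3m)
    (hγ : 0 < γ1m ∧ 0 < γ1p ∧ 0 < γ2m ∧ 0 < γ2p ∧ 0 < γ3m)
    (Z : AKVSpace N M →L[ℂ] AKVSpace N M) (hZ : IsAKVZ N M hM1 Z)
    (σ : AKVSpace N M →L[ℂ] AKVSpace N M) (hσ : IsState N M σ)
    (hrange : LinearMap.range (σ : AKVSpace N M →ₗ[ℂ] AKVSpace N M) ≤ subA N M Z) :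
    (∀ t : ℝ, 0 ≤ t →
      NormedSpace.exp ((t : ℂ) • LinearMap.toContinuousLinearMap
          (LstarLin N M Γ1m Γ1p Γ2m Γ2p Γ3m γ1m γ1p γ2m γ2p γ3m Z)) σ
        = (((2 * ((N : ℝ) - 1) * Γ2p
              + 2 * ((N : ℝ) - 1) * Γ2m *
                Real.exp (-(t * (2 * ((N : ℝ) - 1) * Γ2m + 2 * ((N : ℝ) - 1) * Γ2p)))) /
            (2 * ((N : ℝ) - 1) * Γ2m + 2 * ((N : ℝ) - 1) * Γ2p) : ℝ) : ℂ) • σ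
          + (((2 * ((N : ℝ) - 1) * Γ2m *
                (1 - Real.exp (-(t * (2 * ((N : ℝ) - 1) * Γ2m + 2 * ((N : ℝ) - 1) * Γ2p))))) /
              (2 * ((N : ℝ) - 1) * Γ2m + 2 * ((N : ℝ) - 1) * Γ2p) : ℝ) : ℂ) •
            (Z * σ * ContinuousLinearMap.adjoint Z)) ∧
    Filter.Tendsto
      (fun t : ℝ =>
        NormedSpace.exp ((t : ℂ) • LinearMap.toContinuousLinearMap
          (LstarLin N M Γ1m Γ1p Γ2m Γ2p Γ3m γ1m γ1p γ2m γ2p γ3m Z)) σ)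
      Filter.atTop
      (nhds ((((2 * ((N : ℝ) - 1) * Γ2p) /
            (2 * ((N : ℝ) - 1) * Γ2m + 2 * ((N : ℝ) - 1) * Γ2p) : ℝ) : ℂ) • σ
          + (((2 * ((N : ℝ) - 1) * Γ2m) /
              (2 * ((N : ℝ) - 1) * Γ2m + 2 * ((N : ℝ) - 1) * Γ2p) : ℝ) : ℂ) •
            (Z * σ * ContinuousLinearMap.adjoint Z))) := by

  obtain ⟨hZ1, hZ2, -, -⟩ := hZ
  have hsa : ContinuousLinearMap.adjoint σ = σ := hσ.1.isSelfAdjoint.star_eq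
  have hN1 : (0 : ℝ) < (N : ℝ) - 1 := by
    have h3 : (3 : ℝ) ≤ (N : ℝ) := by exact_mod_cast hN
    linarith
  have ha : (0 : ℝ) < 2 * ((N : ℝ) - 1) * Γ2m := by
    have := hΓ.2.2.1; positivity
  have hb : (0 : ℝ) < 2 * ((N : ℝ) - 1) * Γ2p := by
    have := hΓ.2.2.2.1; positivity
  have hab : (0 : ℝ) < 2 * ((N : ℝ) - 1) * Γ2m + 2 * ((N : ℝ) - 1) * Γ2p := by linarith
  have habC : ((2 * ((N : ℝ) - 1) * Γ2m : ℝ) : ℂ) + ((2 * ((N : ℝ) - 1) * Γ2p : ℝ) : ℂ) ≠ 0 := by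
    rw [← Complex.ofReal_add]
    exact Complex.ofReal_ne_zero.mpr hab.ne'
  have habC' : 2 * ((N : ℂ) - 1) * (Γ2m : ℂ) + 2 * ((N : ℂ) - 1) * (Γ2p : ℂ) ≠ 0 := by
    exact_mod_cast habC
  have h1C : (N : ℂ) - 1 ≠ 0 := by
    intro h; apply habC'; linear_combination (2 * (Γ2m : ℂ) + 2 * Γ2p) * h
  have h2C : (Γ2m : ℂ) + Γ2p ≠ 0 := by
    intro h; apply habC'; linear_combination (2 * ((N : ℂ) - 1)) * h
  -- index facts
  have hval1 : ((1 : Fin (N + M + 1)) : ℕ) = 1 := by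
    rw [Fin.val_one', Nat.mod_eq_of_lt (by omega)]
  have hmem0 : (0 : Fin (N + M + 1)) ∉ idx2 N M := by
    simp only [idx2, Finset.mem_filter, Finset.mem_univ, true_and, Fin.val_zero]
    omega
  have hmem1 : (1 : Fin (N + M + 1)) ∉ idx2 N M := by
    simp only [idx2, Finset.mem_filter, Finset.mem_univ, true_and, hval1]
    omega
  have hmem1' : (1 : Fin (N + M + 1)) ∉ idx3 N M := by
    simp only [idx3, Finset.mem_filter, Finset.mem_univ, true_and, hval1]
    omega
  -- vanishing of σ on suitable vectors
  have hvan : ∀ x : AKVSpace N M, (∀ v ∈ subA N M Z, (inner ℂ x v : ℂ) = 0) → σ x = 0 := by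
    intro x hx
    rw [← inner_self_eq_zero (𝕜 := ℂ) (x := σ x)]
    have hkey : (inner ℂ (σ x) (σ x) : ℂ) = inner ℂ x (σ (σ x)) := by
      nth_rewrite 1 [← hsa]
      exact ContinuousLinearMap.adjoint_inner_left σ (σ x) x
    rw [hkey]
    exact hx _ (hrange ⟨σ x, rfl⟩)
  have horth : ∀ x : AKVSpace N M, Z x = 0 → ∀ v ∈ subA N M Z, (inner ℂ x v : ℂ) = 0 := by
    intro x hx v hv
    obtain ⟨h1, -⟩ := Submodule.mem_inf.mp hv
    obtain ⟨y, hy⟩ := h1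
    have hxabs : absZ N M Z x = 0 := by
      rw [absZ, ContinuousLinearMap.mul_apply, hx, map_zero]
    calc (inner ℂ x v : ℂ) = inner ℂ x (absZ N M Z y) := by rw [← hy]; rfl
      _ = inner ℂ (absZ N M Z x) y := by
          conv_lhs => rw [← adjoint_absZ (Z := Z)]
          exact ContinuousLinearMap.adjoint_inner_right _ _ _
      _ = 0 := by rw [hxabs, inner_zero_left]
  have hP2x : ∀ x : AKVSpace N M, P2 N M x = 0 → σ x = 0 := fun x hx =>
    hvan x (horth x (Z_apply_eq_zero hZ1 hx))
  have hσe0 : σ (ket N M 0) = 0 := hP2x _ (P2_apply_ket hmem0)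
  have hσe1 : σ (ket N M 1) = 0 := hP2x _ (P2_apply_ket hmem1)
  have hσpsi' : σ (psi' N M) = 0 := hP2x _ P2_apply_psi'
  have hσpsi : σ (psi N M) = 0 := by
    apply hvan; intro v hv
    obtain ⟨-, h2⟩ := Submodule.mem_inf.mp hv
    exact (Submodule.mem_orthogonal _ v).mp h2 _ (Submodule.subset_span (Set.mem_insert _ _))
  have hσZψ' : σ (ContinuousLinearMap.adjoint Z (psi' N M)) = 0 := by
    apply hvan; intro v hv
    obtain ⟨-, h2⟩ := Submodule.mem_inf.mp hv
    exact (Submodule.mem_orthogonal _ v).mp h2 _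
      (Submodule.subset_span (Set.mem_insert_of_mem _ rfl))
  have hZadje1 : ContinuousLinearMap.adjoint Z (ket N M 1) = 0 :=
    Zadj_apply_eq_zero hZ1 (P3_apply_ket hmem1')
  have hZadjpsi : ContinuousLinearMap.adjoint Z (psi N M) = 0 :=
    Zadj_apply_eq_zero hZ1 P3_apply_psi
  -- operator-level facts about σ
  have hσP3 : σ * P3 N M = 0 := by
    rw [P3, Finset.mul_sum]
    refine Finset.sum_eq_zero fun i hi => ?_
    have hiv : σ (ket N M i) = 0 := by
      apply hP2x
      apply P2_apply_ket
      simp only [idx2, idx3, Finset.mem_filter, Finset.mem_univ, true_and] at hi ⊢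
      omega
    rw [mul_ketbra, hiv, ketbra_zero_left]
  have hP3σ : P3 N M * σ = 0 := by
    have h := congrArg ContinuousLinearMap.adjoint hσP3
    simpa [ContinuousLinearMap.mul_def, ContinuousLinearMap.adjoint_comp, adjoint_P3, hsa] using h
  have hσZ : σ * Z = 0 := by
    rw [hZ1, ← mul_assoc, ← mul_assoc, hσP3, zero_mul, zero_mul]
  have hZadjσ : ContinuousLinearMap.adjoint Z * σ = 0 := by
    have h := congrArg ContinuousLinearMap.adjoint hσZ
    simpa [ContinuousLinearMap.mul_def, ContinuousLinearMap.adjoint_comp, hsa] using h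
  have habsσ : absZ N M Z * σ = σ := by
    ext x
    have hx : σ x ∈ LinearMap.range (absZ N M Z : AKVSpace N M →ₗ[ℂ] AKVSpace N M) :=
      (Submodule.mem_inf.mp (hrange ⟨x, rfl⟩)).1
    obtain ⟨y, hy⟩ := hx
    have hy' : absZ N M Z y = σ x := hy
    rw [ContinuousLinearMap.mul_apply, ← hy', ← ContinuousLinearMap.mul_apply,
      absZ_mul_absZ hZ1 hZ2]
  have hσabs : σ * absZ N M Z = σ := by
    have h := congrArg ContinuousLinearMap.adjoint habsσ
    simpa [ContinuousLinearMap.mul_def, ContinuousLinearMap.adjoint_comp, hsa,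
      adjoint_absZ (Z := Z)] using h
  have hσZadjZ : σ * (ContinuousLinearMap.adjoint Z * Z) = σ := hσabs
  have habsσ' : ContinuousLinearMap.adjoint Z * Z * σ = σ := habsσ
  have hZadjZσ : ContinuousLinearMap.adjoint Z * (Z * σ) = σ := by
    rw [← mul_assoc]; exact habsσ
  have hZZW : ∀ W : AKVSpace N M →L[ℂ] AKVSpace N M, Z * (Z * W) = 0 := fun W => by
    rw [← mul_assoc, Z_mul_Z hZ1, zero_mul]
  have hZadj2W : ∀ W : AKVSpace N M →L[ℂ] AKVSpace N M,
      ContinuousLinearMap.adjoint Z * (ContinuousLinearMap.adjoint Z * W) = 0 := fun W => by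
    rw [← mul_assoc, Zadj_mul_Zadj hZ1, zero_mul]
  have hZZadjW : ∀ W : AKVSpace N M →L[ℂ] AKVSpace N M,
      Z * (ContinuousLinearMap.adjoint Z * W) = P3 N M * W := fun W => by
    rw [← mul_assoc, hZ2]
  have hP3ZW : ∀ W : AKVSpace N M →L[ℂ] AKVSpace N M,
      P3 N M * (Z * W) = Z * W := fun W => by
    rw [← mul_assoc, P3_mul_Z hZ1]
  have habsZZ : absZ N M Z * Z = 0 := by
    rw [absZ, mul_assoc, Z_mul_Z hZ1, mul_zero]
  have habsZZW : ∀ W : AKVSpace N M →L[ℂ] AKVSpace N M,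
      absZ N M Z * (Z * W) = 0 := fun W => by
    rw [← mul_assoc, habsZZ, zero_mul]
  have hZadjP3 : ContinuousLinearMap.adjoint Z * P3 N M = ContinuousLinearMap.adjoint Z := by
    conv_lhs => rw [adjoint_Z_eq hZ1]
    rw [mul_assoc, P3_mul_P3, ← adjoint_Z_eq hZ1]
  have hZadjabsZ : ContinuousLinearMap.adjoint Z * absZ N M Z = 0 := by
    rw [absZ, ← mul_assoc, Zadj_mul_Zadj hZ1, zero_mul]
  have hadj_smul : ∀ (r : ℝ) (A : AKVSpace N M →L[ℂ] AKVSpace N M),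
      ContinuousLinearMap.adjoint ((r : ℂ) • A) = (r : ℂ) • ContinuousLinearMap.adjoint A := by
    intro r A
    symm
    rw [ContinuousLinearMap.eq_adjoint_iff]
    intro x y
    rw [ContinuousLinearMap.smul_apply, ContinuousLinearMap.smul_apply, inner_smul_left,
      inner_smul_right, Complex.conj_ofReal, ContinuousLinearMap.adjoint_inner_left]
  have hsq_a : ((Real.sqrt (2 * (((N : ℝ) - 1) * Γ2m)) : ℝ) : ℂ) * ((Real.sqrt (2 * (((N : ℝ) - 1) * Γ2m)) : ℝ) : ℂ)
      = ((2 * (((N : ℝ) - 1) * Γ2m) : ℝ) : ℂ) := by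
    rw [← Complex.ofReal_mul, Real.mul_self_sqrt (by linarith : (0:ℝ) ≤ 2 * (((N : ℝ) - 1) * Γ2m))]
  have hsq_b : ((Real.sqrt (2 * (((N : ℝ) - 1) * Γ2p)) : ℝ) : ℂ) * ((Real.sqrt (2 * (((N : ℝ) - 1) * Γ2p)) : ℝ) : ℂ)
      = ((2 * (((N : ℝ) - 1) * Γ2p) : ℝ) : ℂ) := by
    rw [← Complex.ofReal_mul, Real.mul_self_sqrt (by linarith : (0:ℝ) ≤ 2 * (((N : ℝ) - 1) * Γ2p))]
  have hketσ : ∀ u v : AKVSpace N M, ketbra N M u v * σ = ketbra N M u (σ v) := by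
    intro u v; rw [ketbra_mul, hsa]
  -- Heff products
  have hHσ : Heff N M γ1m γ1p γ2m γ2p γ3m Z * σ = -((((N : ℂ) - 1) * (γ2m : ℂ)) • σ) := by
    simp only [Heff, sub_mul, add_mul, smul_mul_assoc, ketbra_mul, hsa, hσpsi, hσe1, hσpsi',
      ketbra_zero_right, hP3σ, habsσ, smul_zero, zero_sub, sub_zero, zero_add, add_zero,
      neg_smul]
  have hσH : σ * Heff N M γ1m γ1p γ2m γ2p γ3m Z = -((((N : ℂ) - 1) * (γ2m : ℂ)) • σ) := by
    simp only [Heff, mul_sub, mul_add, mul_smul_comm, mul_ketbra, hσpsi, hσe1, hσpsi',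
      ketbra_zero_left, hσP3, hσabs, smul_zero, zero_sub, sub_zero, zero_add, add_zero,
      neg_smul]
  have hHτ : Heff N M γ1m γ1p γ2m γ2p γ3m Z * (Z * (σ * ContinuousLinearMap.adjoint Z))
      = (((N : ℂ) - 1) * (γ2p : ℂ)) • (Z * (σ * ContinuousLinearMap.adjoint Z)) := by
    simp only [Heff, sub_mul, add_mul, smul_mul_assoc, mul_assoc, ketbra_mul_assoc,
      ContinuousLinearMap.adjoint_adjoint, hsa, hZadjpsi, hZadje1, hσZψ',
      ketbra_zero_right, hP3ZW, habsZZW, smul_zero, zero_mul, mul_zero,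
      zero_sub, sub_zero, zero_add, add_zero, neg_smul, neg_zero, sub_self]
  have hτH : Z * (σ * (ContinuousLinearMap.adjoint Z * Heff N M γ1m γ1p γ2m γ2p γ3m Z))
      = (((N : ℂ) - 1) * (γ2p : ℂ)) • (Z * (σ * ContinuousLinearMap.adjoint Z)) := by
    simp only [Heff, mul_sub, mul_add, mul_smul_comm, mul_ketbra, hZadjpsi, hZadje1,
      hσZψ', map_zero, ketbra_zero_left, hZadjP3, hZadjabsZ, mul_zero, smul_zero,
      zero_sub, sub_zero, zero_add, add_zero, neg_smul, neg_zero, sub_self, neg_neg]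
  -- the generator on σ and on ZσZ†
  have hLσ : LstarLin N M Γ1m Γ1p Γ2m Γ2p Γ3m γ1m γ1p γ2m γ2p γ3m Z σ
      = ((2 * ((N : ℝ) - 1) * Γ2m : ℝ) : ℂ) • (Z * σ * ContinuousLinearMap.adjoint Z) - ((2 * ((N : ℝ) - 1) * Γ2m : ℝ) : ℂ) • σ := by
    simp only [LstarLin, LinearMap.add_apply, LinearMap.smul_apply, LinearMap.sub_apply,
      LinearMap.sum_apply, LinearMap.mulLeft_apply, LinearMap.mulRight_apply,
      LinearMap.coe_comp, Function.comp_apply, Fin.sum_univ_five, kraus,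
      Matrix.cons_val_zero, Matrix.cons_val_one, Matrix.head_cons, Matrix.cons_val_two,
      Matrix.tail_cons, Matrix.cons_val_three, Matrix.cons_val_four]
    simp only [hHσ, hσH, hadj_smul, adjoint_ketbra, ContinuousLinearMap.adjoint_adjoint,
      smul_mul_assoc, mul_smul_comm, mul_assoc, smul_smul, hsq_a, hsq_b,
      hketσ, mul_ketbra, ketbra_mul_assoc, hsa, ketbra_apply,
      ketbra_smul_left, ketbra_smul_right, inner_ket_ket, if_true, one_smul,
      hσe0, hσe1, hσpsi, hσpsi', hσZψ', hZadje1, hZadjpsi,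
      ketbra_zero_left, ketbra_zero_right, map_zero,
      hσP3, hP3σ, hσZ, hZadjσ, habsσ, hσabs, hσZadjZ, habsσ', hZ2, hZadjZσ, hZZW, hZadj2W,
      hZZadjW, hP3ZW, habsZZ, habsZZW, hZadjP3, hZadjabsZ, Z_mul_Z hZ1, Zadj_mul_Zadj hZ1,
      mul_zero, zero_mul, smul_zero, add_zero, zero_add, sub_zero, zero_sub, sub_self,
      neg_zero]
    module
  have hLτ : LstarLin N M Γ1m Γ1p Γ2m Γ2p Γ3m γ1m γ1p γ2m γ2p γ3m Z
        (Z * σ * ContinuousLinearMap.adjoint Z)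
      = ((2 * ((N : ℝ) - 1) * Γ2p : ℝ) : ℂ) • σ - ((2 * ((N : ℝ) - 1) * Γ2p : ℝ) : ℂ) • (Z * σ * ContinuousLinearMap.adjoint Z) := by
    simp only [LstarLin, LinearMap.add_apply, LinearMap.smul_apply, LinearMap.sub_apply,
      LinearMap.sum_apply, LinearMap.mulLeft_apply, LinearMap.mulRight_apply,
      LinearMap.coe_comp, Function.comp_apply, Fin.sum_univ_five, kraus,
      Matrix.cons_val_zero, Matrix.cons_val_one, Matrix.head_cons, Matrix.cons_val_two,
      Matrix.tail_cons, Matrix.cons_val_three, Matrix.cons_val_four]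
    simp only [hHτ, hτH, hadj_smul, adjoint_ketbra, ContinuousLinearMap.adjoint_adjoint,
      smul_mul_assoc, mul_smul_comm, mul_assoc, smul_smul, hsq_a, hsq_b,
      hketσ, mul_ketbra, ketbra_mul_assoc, hsa, ketbra_apply,
      ketbra_smul_left, ketbra_smul_right, inner_ket_ket, if_true, one_smul,
      hσe0, hσe1, hσpsi, hσpsi', hσZψ', hZadje1, hZadjpsi,
      ketbra_zero_left, ketbra_zero_right, map_zero,
      hσP3, hP3σ, hσZ, hZadjσ, habsσ, hσabs, hσZadjZ, habsσ', hZ2, hZadjZσ, hZZW, hZadj2W,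
      hZZadjW, hP3ZW, habsZZ, habsZZW, hZadjP3, hZadjabsZ, Z_mul_Z hZ1, Zadj_mul_Zadj hZ1,
      mul_zero, zero_mul, smul_zero, add_zero, zero_add, sub_zero, zero_sub, sub_self,
      neg_zero]
    module
  -- the semigroup formula
  set τ : AKVSpace N M →L[ℂ] AKVSpace N M := Z * σ * ContinuousLinearMap.adjoint Z with hτ
  set L' : (AKVSpace N M →L[ℂ] AKVSpace N M) →L[ℂ] (AKVSpace N M →L[ℂ] AKVSpace N M) :=
    LinearMap.toContinuousLinearMap
      (LstarLin N M Γ1m Γ1p Γ2m Γ2p Γ3m γ1m γ1p γ2m γ2p γ3m Z) with hL'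
  have hL'app : ∀ ρ, L' ρ = LstarLin N M Γ1m Γ1p Γ2m Γ2p Γ3m γ1m γ1p γ2m γ2p γ3m Z ρ :=
    fun ρ => rfl
  have hformula : ∀ t : ℝ,
      NormedSpace.exp ((t : ℂ) • L') σ
        = (((2 * ((N : ℝ) - 1) * Γ2p + 2 * ((N : ℝ) - 1) * Γ2m * Real.exp (-(t * (2 * ((N : ℝ) - 1) * Γ2m + 2 * ((N : ℝ) - 1) * Γ2p)))) / (2 * ((N : ℝ) - 1) * Γ2m + 2 * ((N : ℝ) - 1) * Γ2p) : ℝ) : ℂ) • σ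
          + (((2 * ((N : ℝ) - 1) * Γ2m * (1 - Real.exp (-(t * (2 * ((N : ℝ) - 1) * Γ2m + 2 * ((N : ℝ) - 1) * Γ2p))))) / (2 * ((N : ℝ) - 1) * Γ2m + 2 * ((N : ℝ) - 1) * Γ2p) : ℝ) : ℂ) • τ := by
    intro t
    have hTv1 : ((t : ℂ) • L') (((2 * ((N : ℝ) - 1) * Γ2p : ℝ) : ℂ) • σ + ((2 * ((N : ℝ) - 1) * Γ2m : ℝ) : ℂ) • τ)
        = (0 : ℂ) • (((2 * ((N : ℝ) - 1) * Γ2p : ℝ) : ℂ) • σ + ((2 * ((N : ℝ) - 1) * Γ2m : ℝ) : ℂ) • τ) := by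
      rw [ContinuousLinearMap.smul_apply, hL'app, map_add, map_smul, map_smul, hLσ, hLτ]
      module
    have hTv2 : ((t : ℂ) • L') (σ - τ)
        = ((-(t * (2 * ((N : ℝ) - 1) * Γ2m + 2 * ((N : ℝ) - 1) * Γ2p)) : ℝ) : ℂ) • (σ - τ) := by
      rw [ContinuousLinearMap.smul_apply, hL'app, map_sub, hLσ, hLτ]
      push_cast
      module
    have hexp1 := exp_apply_eigenvector ((t : ℂ) • L') _ _ hTv1
    have hexp2 := exp_apply_eigenvector ((t : ℂ) • L') _ _ hTv2
    have hdecomp : σ = (((2 * ((N : ℝ) - 1) * Γ2m + 2 * ((N : ℝ) - 1) * Γ2p)⁻¹ : ℝ) : ℂ) • (((2 * ((N : ℝ) - 1) * Γ2p : ℝ) : ℂ) • σ + ((2 * ((N : ℝ) - 1) * Γ2m : ℝ) : ℂ) • τ)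
        + ((2 * ((N : ℝ) - 1) * Γ2m / (2 * ((N : ℝ) - 1) * Γ2m + 2 * ((N : ℝ) - 1) * Γ2p) : ℝ) : ℂ) • (σ - τ) := by
      match_scalars <;> (push_cast; field_simp; try ring)
    conv_lhs => rw [hdecomp, map_add, map_smul, map_smul, hexp1, hexp2]
    rw [Complex.exp_zero, one_smul, ← Complex.ofReal_exp]
    push_cast
    match_scalars <;> (push_cast; field_simp; try ring)
  constructor
  · intro t _
    exact hformula t
  · have h1 : Filter.Tendsto (fun t : ℝ => t * (2 * ((N : ℝ) - 1) * Γ2m + 2 * ((N : ℝ) - 1) * Γ2p)) Filter.atTop Filter.atTop :=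
      Filter.Tendsto.atTop_mul_const hab Filter.tendsto_id
    have hE : Filter.Tendsto (fun t : ℝ => Real.exp (-(t * (2 * ((N : ℝ) - 1) * Γ2m + 2 * ((N : ℝ) - 1) * Γ2p)))) Filter.atTop
        (nhds 0) :=
      Real.tendsto_exp_atBot.comp (Filter.tendsto_neg_atTop_atBot.comp h1)
    have hc1 : Filter.Tendsto
        (fun t : ℝ => (((2 * ((N : ℝ) - 1) * Γ2p + 2 * ((N : ℝ) - 1) * Γ2m * Real.exp (-(t * (2 * ((N : ℝ) - 1) * Γ2m + 2 * ((N : ℝ) - 1) * Γ2p)))) / (2 * ((N : ℝ) - 1) * Γ2m + 2 * ((N : ℝ) - 1) * Γ2p) : ℝ) : ℂ))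
        Filter.atTop (nhds ((2 * ((N : ℝ) - 1) * Γ2p / (2 * ((N : ℝ) - 1) * Γ2m + 2 * ((N : ℝ) - 1) * Γ2p) : ℝ) : ℂ)) := by
      have : Filter.Tendsto
          (fun t : ℝ => (2 * ((N : ℝ) - 1) * Γ2p + 2 * ((N : ℝ) - 1) * Γ2m * Real.exp (-(t * (2 * ((N : ℝ) - 1) * Γ2m + 2 * ((N : ℝ) - 1) * Γ2p)))) / (2 * ((N : ℝ) - 1) * Γ2m + 2 * ((N : ℝ) - 1) * Γ2p))
          Filter.atTop (nhds (2 * ((N : ℝ) - 1) * Γ2p / (2 * ((N : ℝ) - 1) * Γ2m + 2 * ((N : ℝ) - 1) * Γ2p))) := by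
        have := ((hE.const_mul (2 * ((N : ℝ) - 1) * Γ2m)).const_add (2 * ((N : ℝ) - 1) * Γ2p)).div_const (2 * ((N : ℝ) - 1) * Γ2m + 2 * ((N : ℝ) - 1) * Γ2p)
        simpa using this
      exact (Complex.continuous_ofReal.tendsto _).comp this
    have hc2 : Filter.Tendsto
        (fun t : ℝ => (((2 * ((N : ℝ) - 1) * Γ2m * (1 - Real.exp (-(t * (2 * ((N : ℝ) - 1) * Γ2m + 2 * ((N : ℝ) - 1) * Γ2p))))) / (2 * ((N : ℝ) - 1) * Γ2m + 2 * ((N : ℝ) - 1) * Γ2p) : ℝ) : ℂ))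
        Filter.atTop (nhds ((2 * ((N : ℝ) - 1) * Γ2m / (2 * ((N : ℝ) - 1) * Γ2m + 2 * ((N : ℝ) - 1) * Γ2p) : ℝ) : ℂ)) := by
      have : Filter.Tendsto
          (fun t : ℝ => (2 * ((N : ℝ) - 1) * Γ2m * (1 - Real.exp (-(t * (2 * ((N : ℝ) - 1) * Γ2m + 2 * ((N : ℝ) - 1) * Γ2p))))) / (2 * ((N : ℝ) - 1) * Γ2m + 2 * ((N : ℝ) - 1) * Γ2p))
          Filter.atTop (nhds (2 * ((N : ℝ) - 1) * Γ2m / (2 * ((N : ℝ) - 1) * Γ2m + 2 * ((N : ℝ) - 1) * Γ2p))) := by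
        have hone : Filter.Tendsto (fun _ : ℝ => (1 : ℝ)) Filter.atTop (nhds 1) :=
          tendsto_const_nhds
        have := (((hone.sub hE).const_mul (2 * ((N : ℝ) - 1) * Γ2m))).div_const (2 * ((N : ℝ) - 1) * Γ2m + 2 * ((N : ℝ) - 1) * Γ2p)
        simpa using this
      exact (Complex.continuous_ofReal.tendsto _).comp this
    have hmain := (hc1.smul_const σ).add (hc2.smul_const τ)
    refine hmain.congr ?_
    intro t
    exact (hformula t).symm

end AKV
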